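/- (Reduction to the dispersionless Hirota equation.) Let a : ℝ → ℝ and Ξ : ℝ³ → ℝ be smooth, let λ₁,…,λ₄ ∈ ℝ, and define Θ(x¹,x²,x³,x⁴) = a(x¹) Ξ(x²,x³,x⁴). At every point where a(x¹) a'(x¹) ≠ 0, Θ satisfies the symmetric general heavenly equation (λ₁−λ₂)(λ₃−λ₄)Θ_{x¹x²}Θ_{x³x⁴} + (λ₂−λ₃)(λ₁−λ₄)Θ_{x²x³}Θ_{x¹x⁴} + (λ₃−λ₁)(λ₂−λ₄)Θ_{x³x¹}Θ_{x²x⁴} = 0 if and only if Ξ satisfies the dispersionless Hirota equation (λ₁−λ₂)(λ₃−λ₄)Ξ_{x²}Ξ_{x³x⁴} + (λ₂−λ₃)(λ₁−λ₄)Ξ_{x⁴}Ξ_{x²x³} + (λ₃−λ₁)(λ₂−λ₄)Ξ_{x³}Ξ_{x²x⁴} = 0 at the corresponding point. -/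

import Mathlib

noncomputable section

/-- Partial derivative of `f : ℝⁿ → ℝ` in the `i`-th coordinate direction. -/
def pd {n : ℕ} (i : Fin n) (f : (Fin n → ℝ) → ℝ) : (Fin n → ℝ) → ℝ :=
  fun p => fderiv ℝ f p (Pi.single i 1)

def stmt18π : (Fin 4 → ℝ) →L[ℝ] (Fin 3 → ℝ) :=
  ContinuousLinearMap.pi (fun j : Fin 3 => ContinuousLinearMap.proj j.succ)

lemma contDiff_pd {n : ℕ} (i : Fin n) {F : (Fin n → ℝ) → ℝ} (hF : ContDiff ℝ (⊤:ℕ∞) F) :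
    ContDiff ℝ (⊤:ℕ∞) (pd i F) :=
  (contDiff_infty_iff_fderiv.mp hF).2.clm_apply contDiff_const

lemma stmt18_key (b : ℝ → ℝ) (F : (Fin 3 → ℝ) → ℝ) (hb : ContDiff ℝ (⊤:ℕ∞) b)
    (hF : ContDiff ℝ (⊤:ℕ∞) F) (v : Fin 4 → ℝ) (i : Fin 4) :
    pd i (fun v' => b (v' 0) * F (fun k : Fin 3 => v' k.succ)) v
      = b (v 0) * (fderiv ℝ F (fun k : Fin 3 => v k.succ))
          (fun k : Fin 3 => (Pi.single i 1 : Fin 4 → ℝ) k.succ)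
        + F (fun k : Fin 3 => v k.succ) * (deriv b (v 0) * (Pi.single i 1 : Fin 4 → ℝ) 0) := by
  have hA : HasFDerivAt (fun v' : Fin 4 → ℝ => b (v' 0))
      (deriv b (v 0) • (ContinuousLinearMap.proj (R := ℝ) (φ := fun _ : Fin 4 => ℝ) 0)) v :=
    ((hb.differentiable (by simp) (v 0)).hasDerivAt).comp_hasFDerivAt v
      ((ContinuousLinearMap.proj (R := ℝ) (φ := fun _ : Fin 4 => ℝ) 0).hasFDerivAt)
  have hB : HasFDerivAt (fun v' : Fin 4 → ℝ => F (fun k : Fin 3 => v' k.succ))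
      ((fderiv ℝ F (stmt18π v)).comp stmt18π) v :=
    ((hF.differentiable (by simp) (stmt18π v)).hasFDerivAt).comp v
      stmt18π.hasFDerivAt
  have h : fderiv ℝ (fun v' : Fin 4 → ℝ => b (v' 0) * F (fun k : Fin 3 => v' k.succ)) v = _ :=
    (hA.mul hB).fderiv
  simp only [pd, h]
  simp [stmt18π]

lemma stmt18_pd0 (b : ℝ → ℝ) (F : (Fin 3 → ℝ) → ℝ) (hb : ContDiff ℝ (⊤:ℕ∞) b)
    (hF : ContDiff ℝ (⊤:ℕ∞) F) (v : Fin 4 → ℝ) :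
    pd 0 (fun v' => b (v' 0) * F (fun k : Fin 3 => v' k.succ)) v
      = deriv b (v 0) * F (fun k : Fin 3 => v k.succ) := by
  rw [stmt18_key b F hb hF v 0]
  have h1 : (fun k : Fin 3 => (Pi.single (0 : Fin 4) 1 : Fin 4 → ℝ) k.succ) = 0 := by
    funext k; simp [Pi.single_apply, Fin.succ_ne_zero]
  rw [h1]
  simp [mul_comm]

lemma stmt18_pdsucc (b : ℝ → ℝ) (F : (Fin 3 → ℝ) → ℝ) (hb : ContDiff ℝ (⊤:ℕ∞) b)
    (hF : ContDiff ℝ (⊤:ℕ∞) F) (v : Fin 4 → ℝ) (j : Fin 3) :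
    pd j.succ (fun v' => b (v' 0) * F (fun k : Fin 3 => v' k.succ)) v
      = b (v 0) * pd j F (fun k : Fin 3 => v k.succ) := by
  rw [stmt18_key b F hb hF v j.succ]
  have h1 : (fun k : Fin 3 => (Pi.single (j.succ : Fin 4) 1 : Fin 4 → ℝ) k.succ)
      = (Pi.single j 1 : Fin 3 → ℝ) := by
    funext k; simp [Pi.single_apply, Fin.succ_inj]
  have h2 : (Pi.single (j.succ : Fin 4) 1 : Fin 4 → ℝ) 0 = 0 := by
    simp [Pi.single_apply, (Fin.succ_ne_zero j).symm]
  rw [h1, h2]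
  simp [pd]

/-- reduction to the dispersionless Hirota equation: with
`Θ(x¹,x²,x³,x⁴) = a(x¹) Ξ(x²,x³,x⁴)`, at every point where `a(x¹) a'(x¹) ≠ 0`, `Θ`
satisfies the symmetric general heavenly equation iff `Ξ` satisfies the dispersionless
Hirota equation at the corresponding point. -/
theorem stmt18 (a : ℝ → ℝ) (Ξ : (Fin 3 → ℝ) → ℝ) (ha : ContDiff ℝ (⊤ : ℕ∞) a)
    (hΞ : ContDiff ℝ (⊤ : ℕ∞) Ξ) (lam : Fin 4 → ℝ) :
    ∀ v : Fin 4 → ℝ, a (v 0) * deriv a (v 0) ≠ 0 →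
      (((lam 0 - lam 1) * (lam 2 - lam 3) *
            (pd 0 (pd 1 (fun v' => a (v' 0) * Ξ (fun j : Fin 3 => v' j.succ))) v *
              pd 2 (pd 3 (fun v' => a (v' 0) * Ξ (fun j : Fin 3 => v' j.succ))) v) +
          (lam 1 - lam 2) * (lam 0 - lam 3) *
            (pd 1 (pd 2 (fun v' => a (v' 0) * Ξ (fun j : Fin 3 => v' j.succ))) v *
              pd 0 (pd 3 (fun v' => a (v' 0) * Ξ (fun j : Fin 3 => v' j.succ))) v) +
          (lam 2 - lam 0) * (lam 1 - lam 3) *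
            (pd 2 (pd 0 (fun v' => a (v' 0) * Ξ (fun j : Fin 3 => v' j.succ))) v *
              pd 1 (pd 3 (fun v' => a (v' 0) * Ξ (fun j : Fin 3 => v' j.succ))) v) = 0) ↔
        ((lam 0 - lam 1) * (lam 2 - lam 3) *
            (pd 0 Ξ (fun j : Fin 3 => v j.succ) * pd 1 (pd 2 Ξ) (fun j : Fin 3 => v j.succ)) +
          (lam 1 - lam 2) * (lam 0 - lam 3) *
            (pd 2 Ξ (fun j : Fin 3 => v j.succ) * pd 0 (pd 1 Ξ) (fun j : Fin 3 => v j.succ)) +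
          (lam 2 - lam 0) * (lam 1 - lam 3) *
            (pd 1 Ξ (fun j : Fin 3 => v j.succ) * pd 0 (pd 2 Ξ) (fun j : Fin 3 => v j.succ)) =
          0)) := by
  intro v hv
  have ha' : ContDiff ℝ (⊤:ℕ∞) (deriv a) := by
    exact_mod_cast (contDiff_infty_iff_deriv.mp (by exact_mod_cast ha)).2
  -- first-order rewrites at the level of functions
  have E0 : pd 0 (fun v' => a (v' 0) * Ξ (fun j : Fin 3 => v' j.succ))
      = fun v' => deriv a (v' 0) * Ξ (fun k : Fin 3 => v' k.succ) :=
    funext fun v' => stmt18_pd0 a Ξ ha hΞ v'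
  have E1 : pd 1 (fun v' => a (v' 0) * Ξ (fun j : Fin 3 => v' j.succ))
      = fun v' => a (v' 0) * pd 0 Ξ (fun k : Fin 3 => v' k.succ) :=
    funext fun v' => stmt18_pdsucc a Ξ ha hΞ v' 0
  have E2 : pd 2 (fun v' => a (v' 0) * Ξ (fun j : Fin 3 => v' j.succ))
      = fun v' => a (v' 0) * pd 1 Ξ (fun k : Fin 3 => v' k.succ) :=
    funext fun v' => stmt18_pdsucc a Ξ ha hΞ v' 1
  have E3 : pd 3 (fun v' => a (v' 0) * Ξ (fun j : Fin 3 => v' j.succ))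
      = fun v' => a (v' 0) * pd 2 Ξ (fun k : Fin 3 => v' k.succ) :=
    funext fun v' => stmt18_pdsucc a Ξ ha hΞ v' 2
  rw [E0, E1, E2, E3]
  -- second-order values at v
  have h01 : pd 0 (fun v' => a (v' 0) * pd 0 Ξ (fun k : Fin 3 => v' k.succ)) v
      = deriv a (v 0) * pd 0 Ξ (fun k : Fin 3 => v k.succ) :=
    stmt18_pd0 a (pd 0 Ξ) ha (contDiff_pd 0 hΞ) v
  have h23 : pd 2 (fun v' => a (v' 0) * pd 2 Ξ (fun k : Fin 3 => v' k.succ)) v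
      = a (v 0) * pd 1 (pd 2 Ξ) (fun k : Fin 3 => v k.succ) :=
    stmt18_pdsucc a (pd 2 Ξ) ha (contDiff_pd 2 hΞ) v 1
  have h12 : pd 1 (fun v' => a (v' 0) * pd 1 Ξ (fun k : Fin 3 => v' k.succ)) v
      = a (v 0) * pd 0 (pd 1 Ξ) (fun k : Fin 3 => v k.succ) :=
    stmt18_pdsucc a (pd 1 Ξ) ha (contDiff_pd 1 hΞ) v 0
  have h03 : pd 0 (fun v' => a (v' 0) * pd 2 Ξ (fun k : Fin 3 => v' k.succ)) v
      = deriv a (v 0) * pd 2 Ξ (fun k : Fin 3 => v k.succ) :=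
    stmt18_pd0 a (pd 2 Ξ) ha (contDiff_pd 2 hΞ) v
  have h20 : pd 2 (fun v' => deriv a (v' 0) * Ξ (fun k : Fin 3 => v' k.succ)) v
      = deriv a (v 0) * pd 1 Ξ (fun k : Fin 3 => v k.succ) :=
    stmt18_pdsucc (deriv a) Ξ ha' hΞ v 1
  have h13 : pd 1 (fun v' => a (v' 0) * pd 2 Ξ (fun k : Fin 3 => v' k.succ)) v
      = a (v 0) * pd 0 (pd 2 Ξ) (fun k : Fin 3 => v k.succ) :=
    stmt18_pdsucc a (pd 2 Ξ) ha (contDiff_pd 2 hΞ) v 0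
  rw [h01, h23, h12, h03, h20, h13]
  constructor
  · intro h
    apply mul_left_cancel₀ hv
    rw [mul_zero]
    linear_combination h
  · intro h
    linear_combination (a (v 0) * deriv a (v 0)) * h
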